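/- Boolean union-find reduces to mergeable trees without cuts or parent queries: if each set is maintained as a heap-ordered path whose nodes are its elements, then (a) merging two disjoint paths yields the heap-ordered path on the union of their elements, so unite is a single merge; and (b) for elements x and y, x and y are in the same set if and only if root(x) = root(y), where root returns the minimum element of the path, equivalently iff nca(x,y) ≠ null. -/

import Mathlib

/-- `prel p a b` : `b` is the parent of `a`. -/
def prel (p : ℤ → Option ℤ) (a b : ℤ) : Prop := p a = some b

/-- `anc p a b` : `b` is an ancestor of `a` (including `a` itself). -/
def anc (p : ℤ → Option ℤ) (a b : ℤ) : Prop := Relation.ReflTransGen (prel p) a b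

/-- `IsNca p x y u` : `u` is the nearest common ancestor of `x` and `y`. -/
def IsNca (p : ℤ → Option ℤ) (x y u : ℤ) : Prop :=
  anc p x u ∧ anc p y u ∧ ∀ z, anc p x z → anc p y z → anc p u z

/-- `MergeStep p q v w` : the forest `q` is obtained from the forest `p` by
`merge(v,w)`: the nodes of the root paths of `v` and `w` are rearranged into a
single chain in increasing (heap) order, all other parents unchanged. -/
def MergeStep (p q : ℤ → Option ℤ) (v w : ℤ) : Prop :=
  (∀ x : ℤ, ¬ (anc p v x ∨ anc p w x) → q x = p x) ∧
  (∀ x : ℤ, (anc p v x ∨ anc p w x) →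
    (∀ b : ℤ, q x = some b ↔ ((anc p v b ∨ anc p w b) ∧ b < x ∧
        ∀ z : ℤ, (anc p v z ∨ anc p w z) → z < x → z ≤ b)) ∧
    (q x = none ↔ ∀ z : ℤ, (anc p v z ∨ anc p w z) → ¬ z < x))

lemma anc_mem_le (S : Finset ℤ) (p : ℤ → Option ℤ)
    (hp : ∀ x ∈ S, ∀ b : ℤ, p x = some b ↔ (b ∈ S ∧ b < x ∧ ∀ z ∈ S, z < x → z ≤ b)) :
    ∀ x ∈ S, ∀ z : ℤ, anc p x z → z ∈ S ∧ z ≤ x := by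
  intro x hx z h
  induction h with
  | refl => exact ⟨hx, le_rfl⟩
  | @tail b c h1 h2 ih =>
    have := ((hp b ih.1 c).1 h2)
    exact ⟨this.1, le_trans this.2.1.le ih.2⟩

lemma anc_of_le (S : Finset ℤ) (p : ℤ → Option ℤ)
    (hp : ∀ x ∈ S, ∀ b : ℤ, p x = some b ↔ (b ∈ S ∧ b < x ∧ ∀ z ∈ S, z < x → z ≤ b)) :
    ∀ y ∈ S, ∀ x ∈ S, x ≤ y → anc p y x := by
  suffices H : ∀ n : ℕ, ∀ y ∈ S, ∀ x ∈ S, x ≤ y → (y - x).toNat = n → anc p y x by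
    intro y hy x hx hxy; exact H (y - x).toNat y hy x hx hxy rfl
  intro n
  induction n using Nat.strong_induction_on with
  | _ n ih =>
    intro y hy x hx hxy hn
    rcases eq_or_lt_of_le hxy with h | h
    · subst h; exact Relation.ReflTransGen.refl
    · have hne : (S.filter (· < y)).Nonempty := ⟨x, Finset.mem_filter.2 ⟨hx, h⟩⟩
      set b := (S.filter (· < y)).max' hne with hb
      have hbmem := (S.filter (· < y)).max'_mem hne
      rw [Finset.mem_filter] at hbmem
      have hpy : p y = some b := by
        rw [hp y hy b]
        exact ⟨hbmem.1, hbmem.2, fun z hz hzy =>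
          Finset.le_max' (S.filter (· < y)) z (Finset.mem_filter.2 ⟨hz, hzy⟩)⟩
      have hxb : x ≤ b := Finset.le_max' (S.filter (· < y)) x (Finset.mem_filter.2 ⟨hx, h⟩)
      have hstep : (b - x).toNat < n := by
        subst hn; omega
      exact Relation.ReflTransGen.head hpy (ih _ hstep b hbmem.1 x hx hxb rfl)

lemma root_eq_min (S : Finset ℤ) (hS : S.Nonempty) (p : ℤ → Option ℤ)
    (hp : ∀ x ∈ S, ∀ b : ℤ, p x = some b ↔ (b ∈ S ∧ b < x ∧ ∀ z ∈ S, z < x → z ≤ b)) :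
    ∀ x ∈ S, ∀ r : ℤ, anc p x r → p r = none → r = S.min' hS := by
  intro x hx r hanc hr
  have hrS : r ∈ S := (anc_mem_le S p hp x hx r hanc).1
  by_contra hne
  have hlt : S.min' hS < r := lt_of_le_of_ne (S.min'_le r hrS) (fun h => hne h.symm)
  have hne2 : (S.filter (· < r)).Nonempty := ⟨S.min' hS, Finset.mem_filter.2 ⟨S.min'_mem hS, hlt⟩⟩
  set b := (S.filter (· < r)).max' hne2
  have hbmem := (S.filter (· < r)).max'_mem hne2
  rw [Finset.mem_filter] at hbmem
  have : p r = some b := by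
    rw [hp r hrS b]
    exact ⟨hbmem.1, hbmem.2, fun z hz hzr =>
      Finset.le_max' (S.filter (· < r)) z (Finset.mem_filter.2 ⟨hz, hzr⟩)⟩
  rw [hr] at this; cases this

/-- Boolean union-find reduces to mergeable trees without cuts or parent queries.
Maintain each set as a heap-ordered path (each node's parent is the greatest
smaller element of the set).  If `p` represents two disjoint sets `A` and `B` as
such sorted paths, then: (a) merging at the maxima (the set identifiers) yields
the heap-ordered sorted path on `A ∪ B`, so `unite` is a single merge; and (b) two
elements are in the same set iff their roots coincide, the root of an element
being the minimum of its set, equivalently iff their nca exists (is not null). -/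
theorem union_find_reduction (A B : Finset ℤ) (hA : A.Nonempty) (hB : B.Nonempty)
    (hdisj : Disjoint A B) (p q : ℤ → Option ℤ)
    (hpA : ∀ x ∈ A, ∀ b : ℤ, p x = some b ↔ (b ∈ A ∧ b < x ∧ ∀ z ∈ A, z < x → z ≤ b))
    (hpB : ∀ x ∈ B, ∀ b : ℤ, p x = some b ↔ (b ∈ B ∧ b < x ∧ ∀ z ∈ B, z < x → z ≤ b))
    (hpout : ∀ x : ℤ, x ∉ A → x ∉ B → p x = none)
    (hmerge : MergeStep p q (A.max' hA) (B.max' hB)) :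
    (∀ x ∈ A ∪ B, ∀ b : ℤ,
        q x = some b ↔ (b ∈ A ∪ B ∧ b < x ∧ ∀ z ∈ A ∪ B, z < x → z ≤ b)) ∧
    (∀ x ∈ A ∪ B, ∀ y ∈ A ∪ B, ∀ rx ry : ℤ,
        anc p x rx → p rx = none → anc p y ry → p ry = none →
        ((rx = ry ↔ ((x ∈ A ∧ y ∈ A) ∨ (x ∈ B ∧ y ∈ B))) ∧
         (x ∈ A → rx = A.min' hA) ∧ (x ∈ B → rx = B.min' hB) ∧
         ((∃ u : ℤ, IsNca p x y u) ↔ ((x ∈ A ∧ y ∈ A) ∨ (x ∈ B ∧ y ∈ B))))) := by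
  set v := A.max' hA with hv
  set w := B.max' hB with hw
  have key : ∀ z : ℤ, (anc p v z ∨ anc p w z) ↔ z ∈ A ∪ B := by
    intro z
    constructor
    · rintro (h | h)
      · exact Finset.mem_union_left _ (anc_mem_le A p hpA v (A.max'_mem hA) z h).1
      · exact Finset.mem_union_right _ (anc_mem_le B p hpB w (B.max'_mem hB) z h).1
    · intro hz
      rcases Finset.mem_union.1 hz with hz | hz
      · exact Or.inl (anc_of_le A p hpA v (A.max'_mem hA) z hz (A.le_max' z hz))
      · exact Or.inr (anc_of_le B p hpB w (B.max'_mem hB) z hz (B.le_max' z hz))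
  obtain ⟨_, h2⟩ := hmerge
  constructor
  · intro x hx b
    obtain ⟨hq, _⟩ := h2 x ((key x).2 hx)
    rw [hq b]
    simp only [key]
  · intro x hx y hy rx ry hxrx hrx hyry hry
    have hxA : x ∈ A → rx = A.min' hA := fun h => root_eq_min A hA p hpA x h rx hxrx hrx
    have hxB : x ∈ B → rx = B.min' hB := fun h => root_eq_min B hB p hpB x h rx hxrx hrx
    have hyA : y ∈ A → ry = A.min' hA := fun h => root_eq_min A hA p hpA y h ry hyry hry
    have hyB : y ∈ B → ry = B.min' hB := fun h => root_eq_min B hB p hpB y h ry hyry hry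
    have hdisj' := Finset.disjoint_left.1 hdisj
    refine ⟨⟨?_, ?_⟩, hxA, hxB, ?_, ?_⟩
    · intro h
      rcases Finset.mem_union.1 hx with hx' | hx' <;> rcases Finset.mem_union.1 hy with hy' | hy'
      · exact Or.inl ⟨hx', hy'⟩
      · exfalso
        have h1 : A.min' hA = B.min' hB := by rw [← hxA hx', h, hyB hy']
        have h2 := A.min'_mem hA
        rw [h1] at h2
        exact hdisj' h2 (B.min'_mem hB)
      · exfalso
        have h1 : A.min' hA = B.min' hB := by rw [← hyA hy', ← h, hxB hx']
        have h2 := A.min'_mem hA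
        rw [h1] at h2
        exact hdisj' h2 (B.min'_mem hB)
      · exact Or.inr ⟨hx', hy'⟩
    · rintro (⟨ha, hb⟩ | ⟨ha, hb⟩)
      · rw [hxA ha, hyA hb]
      · rw [hxB ha, hyB hb]
    · rintro ⟨u, hux, huy, _⟩
      rcases Finset.mem_union.1 hx with hx' | hx' <;> rcases Finset.mem_union.1 hy with hy' | hy'
      · exact Or.inl ⟨hx', hy'⟩
      · exact absurd ((anc_mem_le B p hpB y hy' u huy).1)
          (hdisj' (anc_mem_le A p hpA x hx' u hux).1)
      · exact absurd ((anc_mem_le A p hpA y hy' u huy).1)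
          (fun h => hdisj' h (anc_mem_le B p hpB x hx' u hux).1)
      · exact Or.inr ⟨hx', hy'⟩
    · rintro (⟨ha, hb⟩ | ⟨ha, hb⟩)
      · have hmin : min x y ∈ A := by
          rcases min_choice x y with h | h <;> rw [h] <;> assumption
        refine ⟨min x y, anc_of_le A p hpA x ha _ hmin (min_le_left x y),
          anc_of_le A p hpA y hb _ hmin (min_le_right x y), ?_⟩
        intro z hz1 hz2
        have h1 := anc_mem_le A p hpA x ha z hz1
        have h2 := anc_mem_le A p hpA y hb z hz2
        exact anc_of_le A p hpA _ hmin z h1.1 (le_min h1.2 h2.2)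
      · have hmin : min x y ∈ B := by
          rcases min_choice x y with h | h <;> rw [h] <;> assumption
        refine ⟨min x y, anc_of_le B p hpB x ha _ hmin (min_le_left x y),
          anc_of_le B p hpB y hb _ hmin (min_le_right x y), ?_⟩
        intro z hz1 hz2
        have h1 := anc_mem_le B p hpB x ha z hz1
        have h2 := anc_mem_le B p hpB y hb z hz2
        exact anc_of_le B p hpB _ hmin z h1.1 (le_min h1.2 h2.2)
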